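/- Let G be a finite simple graph on a nonempty vertex set V that is vertex-transitive. Then the infimum, over all real vectors J ∈ ℝ^V with Σ_α J_α² = 1 and all H-feasible pairs (v, M) for G, of the inner product Σ_α J_α v_α, is equal to −√(ϑ(G)). -/

import Mathlib

open scoped BigOperators

/-- A theta-feasible matrix for `G`: real symmetric PSD with trace 1 and vanishing on edges. -/
def ThetaFeasible {V : Type*} [Fintype V] (G : SimpleGraph V) (M : Matrix V V ℝ) : Prop :=
  M.IsSymm ∧ M.PosSemidef ∧ M.trace = 1 ∧ ∀ a b, G.Adj a b → M a b = 0

/-- The Lovász theta function of `G`. -/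
noncomputable def lovaszTheta {V : Type*} [Fintype V] (G : SimpleGraph V) : ℝ :=
  sSup {x : ℝ | ∃ M : Matrix V V ℝ, ThetaFeasible G M ∧ x = ∑ a, ∑ b, M a b}

/-- An H²-feasible matrix for `G`: real symmetric PSD, unit diagonal, vanishing on edges. -/
def H2Feasible {V : Type*} [Fintype V] (G : SimpleGraph V) (M : Matrix V V ℝ) : Prop :=
  M.IsSymm ∧ M.PosSemidef ∧ (∀ a, M a a = 1) ∧ ∀ a b, G.Adj a b → M a b = 0

/-- The block matrix N = [[1, vᵀ],[v, M]]. -/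
def blockN {V : Type*} [Fintype V] [DecidableEq V] (v : V → ℝ) (M : Matrix V V ℝ) :
    Matrix (Unit ⊕ V) (Unit ⊕ V) ℝ :=
  Matrix.fromBlocks 1 (Matrix.of fun _ b => v b) (Matrix.of fun a _ => v a) M

/-- An H-feasible pair for `G`. -/
def HFeasible {V : Type*} [Fintype V] [DecidableEq V] (G : SimpleGraph V)
    (v : V → ℝ) (M : Matrix V V ℝ) : Prop :=
  H2Feasible G M ∧ (blockN v M).PosSemidef

/-- `G` is vertex-transitive. -/
def VertexTransitive {V : Type*} (G : SimpleGraph V) : Prop :=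
  ∀ u w : V, ∃ g : G ≃g G, g u = w

set_option linter.unusedSectionVars false
set_option maxHeartbeats 1000000

namespace Stmt0Aux

open Matrix

variable {V : Type*} [Fintype V]

noncomputable def qf (M : Matrix V V ℝ) (x : V → ℝ) : ℝ := ∑ a, ∑ b, x a * M a b * x b

lemma dot_eq_qf (M : Matrix V V ℝ) (x : V → ℝ) :
    dotProduct (star x) (M *ᵥ x) = qf M x := by
  simp [qf, dotProduct, Matrix.mulVec, Finset.mul_sum, mul_assoc]

lemma qf_nonneg {M : Matrix V V ℝ} (h : M.PosSemidef) (x : V → ℝ) : 0 ≤ qf M x := by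
  rw [← dot_eq_qf]; exact h.dotProduct_mulVec_nonneg x

lemma isSymm_of_isHermitian {M : Matrix V V ℝ} (h : M.IsHermitian) : M.IsSymm :=
  Matrix.IsSymm.ext fun i j => by simpa using h.apply i j

lemma posSemidef_of_qf {M : Matrix V V ℝ} (hs : M.IsSymm) (h : ∀ x, 0 ≤ qf M x) :
    M.PosSemidef :=
  Matrix.PosSemidef.of_dotProduct_mulVec_nonneg (Matrix.IsHermitian.ext fun i j => by simpa using hs.apply i j)
    (fun x => by rw [dot_eq_qf]; exact h x)

lemma qf_smul (c : ℝ) (M : Matrix V V ℝ) (x : V → ℝ) : qf (c • M) x = c * qf M x := by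
  simp only [qf, Matrix.smul_apply, smul_eq_mul, Finset.mul_sum]
  refine Finset.sum_congr rfl fun a _ => Finset.sum_congr rfl fun b _ => by ring

lemma psd_smul {M : Matrix V V ℝ} (h : M.PosSemidef) {c : ℝ} (hc : 0 ≤ c) :
    (c • M).PosSemidef := by
  refine posSemidef_of_qf ((isSymm_of_isHermitian h.1).smul c) fun x => ?_
  rw [qf_smul]
  exact mul_nonneg hc (qf_nonneg h x)

lemma entry_bound {M : Matrix V V ℝ} [DecidableEq V] (h : M.PosSemidef) (a b : V) :
    M a b + M b a ≤ M a a + M b b := by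
  have := qf_nonneg h (fun c => (if c = a then (1:ℝ) else 0) - (if c = b then 1 else 0))
  simp [qf, sub_mul, mul_sub, Finset.sum_sub_distrib, ite_mul, mul_ite,
    Finset.sum_ite_eq'] at this
  linarith

lemma sum_nonneg_of_feasible {G : SimpleGraph V} {M : Matrix V V ℝ} (h : ThetaFeasible G M) :
    0 ≤ ∑ a, ∑ b, M a b := by
  have := qf_nonneg h.2.1 (fun _ => 1)
  simpa [qf] using this

lemma theta_bddAbove [DecidableEq V] (G : SimpleGraph V) :
    BddAbove {x : ℝ | ∃ M : Matrix V V ℝ, ThetaFeasible G M ∧ x = ∑ a, ∑ b, M a b} := by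
  refine ⟨(Fintype.card V : ℝ), fun x hx => ?_⟩
  obtain ⟨M, ⟨hsym, hpsd, htr, -⟩, rfl⟩ := hx
  have hb : ∀ a b, M a b ≤ (M a a + M b b) / 2 := by
    intro a b
    have h1 := entry_bound hpsd a b
    have h2 := hsym.apply b a
    linarith
  calc ∑ a, ∑ b, M a b ≤ ∑ a, ∑ b, (M a a + M b b) / 2 :=
        Finset.sum_le_sum fun a _ => Finset.sum_le_sum fun b _ => hb a b
    _ = (Fintype.card V : ℝ) := by
        have htr' : ∑ a, M a a = 1 := by simpa [Matrix.trace, Matrix.diag] using htr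
        have step : ∀ a : V, ∑ b, (M a a + M b b) / 2
            = ((Fintype.card V : ℝ) * M a a + 1) / 2 := by
          intro a
          rw [← Finset.sum_div, Finset.sum_add_distrib, htr', Finset.sum_const,
            Finset.card_univ, nsmul_eq_mul]
        rw [Finset.sum_congr rfl fun a _ => step a, ← Finset.sum_div,
          Finset.sum_add_distrib, ← Finset.mul_sum, htr', Finset.sum_const,
          Finset.card_univ, nsmul_eq_mul]
        ring

lemma id_feasible [DecidableEq V] [Nonempty V] (G : SimpleGraph V) :
    ThetaFeasible G (((Fintype.card V : ℝ))⁻¹ • 1) ∧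
      (∑ a, ∑ b, (((Fintype.card V : ℝ))⁻¹ • (1 : Matrix V V ℝ)) a b) = 1 := by
  have hn : (0:ℝ) < (Fintype.card V : ℝ) := by
    exact_mod_cast Fintype.card_pos
  refine ⟨⟨Matrix.isSymm_one.smul _, ?_, ?_, ?_⟩, ?_⟩
  · exact psd_smul Matrix.PosSemidef.one (by positivity)
  · simp only [Matrix.trace_smul, Matrix.trace_one, smul_eq_mul]
    field_simp
  · intro a b hab
    have : a ≠ b := G.ne_of_adj hab
    simp [Matrix.one_apply, this]
  · simp only [Matrix.smul_apply, Matrix.one_apply, smul_eq_mul, mul_ite, mul_one, mul_zero]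
    rw [Finset.sum_congr rfl fun a (_ : a ∈ Finset.univ) => Finset.sum_ite_eq Finset.univ a
      (fun _ => ((Fintype.card V : ℝ))⁻¹)]
    simp

lemma theta_ge_one [DecidableEq V] [Nonempty V] (G : SimpleGraph V) : 1 ≤ lovaszTheta G := by
  obtain ⟨hfeas, hsum⟩ := id_feasible G
  exact le_csSup (theta_bddAbove G) ⟨_, hfeas, hsum.symm⟩

lemma blockN_qf_elim [DecidableEq V] (v : V → ℝ) (M : Matrix V V ℝ) (s : ℝ) (x : V → ℝ) :
    dotProduct (star (Sum.elim (fun _ : Unit => s) x)) (blockN v M *ᵥ Sum.elim (fun _ => s) x)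
      = s ^ 2 + 2 * s * (∑ a, v a * x a) + qf M x := by
  rw [show (star (Sum.elim (fun _ : Unit => s) x)) = Sum.elim (fun _ : Unit => s) x from
    star_trivial _]
  rw [blockN, Matrix.fromBlocks_mulVec, sumElim_dotProduct_sumElim, ← dot_eq_qf]
  rw [show (star x) = x from star_trivial _]
  simp [dotProduct, Matrix.mulVec, Finset.mul_sum, mul_add, add_mul,
    Finset.sum_add_distrib, mul_assoc, mul_comm, mul_left_comm, sq]
  have h2 : ∀ a : V, s * (v a * (x a * 2)) = s * (v a * x a) + s * (v a * x a) := fun a => by ring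
  simp_rw [h2, Finset.sum_add_distrib]
  ring

lemma blockN_qf_nonneg [DecidableEq V] {v : V → ℝ} {M : Matrix V V ℝ}
    (h : (blockN v M).PosSemidef) (s : ℝ) (x : V → ℝ) :
    0 ≤ s ^ 2 + 2 * s * (∑ a, v a * x a) + qf M x := by
  rw [← blockN_qf_elim]; exact h.dotProduct_mulVec_nonneg _

lemma blockN_posSemidef [DecidableEq V] {v : V → ℝ} {M : Matrix V V ℝ} (hs : M.IsSymm)
    (h : ∀ (s : ℝ) (x : V → ℝ), 0 ≤ s ^ 2 + 2 * s * (∑ a, v a * x a) + qf M x) :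
    (blockN v M).PosSemidef := by
  refine Matrix.PosSemidef.of_dotProduct_mulVec_nonneg (Matrix.IsHermitian.ext fun i j => ?_) fun w => ?_
  · rcases i with u | a <;> rcases j with u' | b <;>
      simp [blockN, hs.apply]
  · have hw : w = Sum.elim (fun _ : Unit => w (Sum.inl ())) (fun a => w (Sum.inr a)) := by
      funext z
      rcases z with u | a
      · cases u; rfl
      · rfl
    rw [hw, blockN_qf_elim]
    exact h _ _

lemma normsq_le_theta [DecidableEq V] [Nonempty V] {G : SimpleGraph V} {v : V → ℝ}
    {M : Matrix V V ℝ} (hH : HFeasible G v M) : (∑ a, v a ^ 2) ≤ lovaszTheta G := by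
  classical
  obtain ⟨⟨hsym, hpsd, hdiag, hedge⟩, hN⟩ := hH
  set t : ℝ := ∑ a, v a ^ 2 with ht
  have ht0 : 0 ≤ t := Finset.sum_nonneg fun a _ => sq_nonneg _
  have hθ1 : (1:ℝ) ≤ lovaszTheta G := theta_ge_one G
  rcases eq_or_lt_of_le ht0 with h0 | htpos
  · linarith
  set B : Matrix V V ℝ := Matrix.of fun a b => v a * M a b * v b / t with hB
  have hBsym : B.IsSymm := Matrix.IsSymm.ext fun i j => by
    simp only [hB, Matrix.of_apply]
    rw [hsym.apply i j]
    ring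
  have hBpsd : B.PosSemidef := by
    refine posSemidef_of_qf hBsym fun x => ?_
    have hq : qf B x = qf M (fun a => x a * v a) / t := by
      simp only [qf, hB, Matrix.of_apply, Finset.sum_div]
      refine Finset.sum_congr rfl fun a _ => ?_
      refine Finset.sum_congr rfl fun b _ => by ring
    rw [hq]
    exact div_nonneg (qf_nonneg hpsd _) ht0
  have hBtr : B.trace = 1 := by
    simp only [Matrix.trace, Matrix.diag, hB, Matrix.of_apply]
    have hstep : ∀ a : V, v a * M a a * v a / t = v a ^ 2 / t := fun a => by
      rw [hdiag a]; ring
    rw [Finset.sum_congr rfl fun a _ => hstep a, ← Finset.sum_div, ← ht,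
      div_self (ne_of_gt htpos)]
  have hBedge : ∀ a b, G.Adj a b → B a b = 0 := fun a b hab => by
    simp [hB, hedge a b hab]
  have hBsum : (∑ a, ∑ b, B a b) = qf M v / t := by
    simp only [qf, hB, Matrix.of_apply, Finset.sum_div]
  have hvv : (∑ a, v a * v a) = t := by
    rw [ht]; exact Finset.sum_congr rfl fun a _ => (sq (v a)).symm
  have hqf : t ^ 2 ≤ qf M v := by
    have h1 := blockN_qf_nonneg hN (-t) v
    rw [hvv] at h1
    nlinarith
  have hle : (∑ a, ∑ b, B a b) ≤ lovaszTheta G :=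
    le_csSup (theta_bddAbove G) ⟨B, ⟨hBsym, hBpsd, hBtr, hBedge⟩, rfl⟩
  rw [hBsum] at hle
  have h2 : t ≤ qf M v / t := by
    rw [le_div_iff₀ htpos]; nlinarith
  linarith

lemma average [DecidableEq V] [Nonempty V] (G : SimpleGraph V) (hG : VertexTransitive G)
    (B : Matrix V V ℝ) (hB : ThetaFeasible G B) :
    ∃ C : Matrix V V ℝ, ThetaFeasible G C ∧ (∑ a, ∑ b, C a b) = (∑ a, ∑ b, B a b) ∧
      (∀ a : V, C a a = ((Fintype.card V : ℝ))⁻¹) ∧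
      (∀ a : V, (∑ b, C a b) = (∑ a, ∑ b, C a b) / (Fintype.card V : ℝ)) := by
  classical
  obtain ⟨hsym, hpsd, htr, hedge⟩ := hB
  letI : Fintype (G ≃g G) := Fintype.ofInjective (fun g : G ≃g G => g.toEquiv)
    fun g h e => by cases g; cases h; simpa using e
  set N : ℝ := (Fintype.card (G ≃g G) : ℝ) with hN
  haveI hNe : Nonempty (G ≃g G) := ⟨RelIso.refl G.Adj⟩
  have hN0 : (0:ℝ) < N := by rw [hN]; exact_mod_cast Fintype.card_pos
  set C : Matrix V V ℝ := Matrix.of (fun a b => N⁻¹ * ∑ g : G ≃g G, B (g a) (g b)) with hC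
  have reindex : ∀ (g : G ≃g G) (f : V → ℝ), (∑ a, f (g a)) = ∑ a, f a := fun g f =>
    Fintype.sum_equiv g.toEquiv _ _ fun a => rfl
  have hinv : ∀ (h : G ≃g G) (a b : V), C (h a) (h b) = C a b := by
    intro h a b
    simp only [hC, Matrix.of_apply]
    congr 1
    have hbij : Function.Bijective (fun g : G ≃g G => h.trans g) := by
      refine Function.bijective_iff_has_inverse.mpr ⟨fun g => h.symm.trans g, ?_, ?_⟩
      · intro g
        ext x
        simp [RelIso.trans_apply]
      · intro g
        ext x
        simp [RelIso.trans_apply]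
    exact Fintype.sum_bijective _ hbij
      (fun g : G ≃g G => B (g (h a)) (g (h b)))
      (fun g : G ≃g G => B (g a) (g b)) fun g => rfl
  have hCsym : C.IsSymm := Matrix.IsSymm.ext fun i j => by
    simp only [hC, Matrix.of_apply]
    congr 1
    exact Finset.sum_congr rfl fun g _ => hsym.apply (g i) (g j)
  have hCpsd : C.PosSemidef := by
    refine posSemidef_of_qf hCsym fun x => ?_
    have hq : qf C x = N⁻¹ * ∑ g : G ≃g G, qf B (fun a => x (g.symm a)) := by
      have h1 : ∀ a b : V, x a * (N⁻¹ * ∑ g : G ≃g G, B (g a) (g b)) * x b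
          = N⁻¹ * ∑ g : G ≃g G, x a * B (g a) (g b) * x b := by
        intro a b
        rw [show x a * (N⁻¹ * ∑ g : G ≃g G, B (g a) (g b)) * x b
            = N⁻¹ * ((∑ g : G ≃g G, B (g a) (g b)) * (x a * x b)) from by ring,
          Finset.sum_mul]
        congr 1
        exact Finset.sum_congr rfl fun g _ => by ring
      have e0 : qf C x = N⁻¹ * ∑ a, ∑ b, ∑ g : G ≃g G, x a * B (g a) (g b) * x b := by
        simp only [qf, hC, Matrix.of_apply]
        simp_rw [h1, ← Finset.mul_sum]
      have e1 : (∑ a : V, ∑ b : V, ∑ g : G ≃g G, x a * B (g a) (g b) * x b)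
          = ∑ g : G ≃g G, ∑ a, ∑ b, x a * B (g a) (g b) * x b := by
        rw [Finset.sum_congr rfl fun a _ => Finset.sum_comm]
        exact Finset.sum_comm
      rw [e0, e1]
      congr 1
      refine Finset.sum_congr rfl fun g _ => ?_
      rw [qf]
      refine Fintype.sum_equiv g.toEquiv _ _ fun a => ?_
      refine Fintype.sum_equiv g.toEquiv _ _ fun b => ?_
      simp
    rw [hq]
    refine mul_nonneg (by positivity) (Finset.sum_nonneg fun g _ => qf_nonneg hpsd _)
  have hCtr : C.trace = 1 := by
    simp only [Matrix.trace, Matrix.diag, hC, Matrix.of_apply, ← Finset.mul_sum]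
    rw [Finset.sum_comm]
    have : ∀ g : G ≃g G, (∑ a, B (g a) (g a)) = 1 := by
      intro g
      rw [reindex g (fun a => B a a)]
      simpa [Matrix.trace, Matrix.diag] using htr
    rw [Finset.sum_congr rfl fun g _ => this g, Finset.sum_const, Finset.card_univ,
      nsmul_eq_mul, mul_one, ← hN, inv_mul_cancel₀ (ne_of_gt hN0)]
  have hCedge : ∀ a b, G.Adj a b → C a b = 0 := by
    intro a b hab
    simp only [hC, Matrix.of_apply]
    have : ∀ g : G ≃g G, B (g a) (g b) = 0 := fun g =>
      hedge _ _ (g.map_adj_iff.mpr hab)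
    rw [Finset.sum_congr rfl fun g _ => this g]
    simp
  have hCsum : (∑ a, ∑ b, C a b) = ∑ a, ∑ b, B a b := by
    have key : ∀ g : G ≃g G, (∑ a, ∑ b, B (g a) (g b)) = ∑ a, ∑ b, B a b := by
      intro g
      calc ∑ a, ∑ b, B (g a) (g b) = ∑ a, ∑ b, B (g a) b :=
            Finset.sum_congr rfl fun a _ => reindex g (fun b => B (g a) b)
        _ = ∑ a, ∑ b, B a b := reindex g (fun a => ∑ b, B a b)
    have e0 : (∑ a, ∑ b, C a b) = N⁻¹ * ∑ a, ∑ b, ∑ g : G ≃g G, B (g a) (g b) := by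
      simp only [hC, Matrix.of_apply, ← Finset.mul_sum]
    have e1 : (∑ a : V, ∑ b : V, ∑ g : G ≃g G, B (g a) (g b))
        = ∑ g : G ≃g G, ∑ a, ∑ b, B (g a) (g b) := by
      rw [Finset.sum_congr rfl fun a _ => Finset.sum_comm]
      exact Finset.sum_comm
    rw [e0, e1, Finset.sum_congr rfl fun g (_ : g ∈ Finset.univ) => key g,
      Finset.sum_const, Finset.card_univ, nsmul_eq_mul, ← hN]
    field_simp
  have hdiagconst : ∀ a b : V, C a a = C b b := by
    intro a b
    obtain ⟨g, hg⟩ := hG a b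
    rw [← hg, hinv g a a]
  have hrowconst : ∀ a b : V, (∑ c, C a c) = ∑ c, C b c := by
    intro a b
    obtain ⟨g, hg⟩ := hG a b
    rw [← hg]
    rw [show (∑ c, C (g a) c) = ∑ c, C (g a) (g c) from (reindex g fun c => C (g a) c).symm]
    exact Finset.sum_congr rfl fun c _ => (hinv g a c).symm
  have hcard : (0:ℝ) < (Fintype.card V : ℝ) := by exact_mod_cast Fintype.card_pos
  refine ⟨C, ⟨hCsym, hCpsd, hCtr, hCedge⟩, hCsum, ?_, ?_⟩
  · intro a
    have h1 : (∑ b, C b b) = 1 := by simpa [Matrix.trace, Matrix.diag] using hCtr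
    have h2 : (∑ b, C b b) = (Fintype.card V : ℝ) * C a a := by
      rw [Finset.sum_congr rfl fun b _ => hdiagconst b a, Finset.sum_const,
        Finset.card_univ, nsmul_eq_mul]
    rw [h2] at h1
    field_simp at h1 ⊢
    linarith
  · intro a
    have h2 : (∑ c, ∑ b, C c b) = (Fintype.card V : ℝ) * ∑ b, C a b := by
      rw [Finset.sum_congr rfl fun c _ => hrowconst c a, Finset.sum_const,
        Finset.card_univ, nsmul_eq_mul]
    rw [h2]
    field_simp

lemma construct [DecidableEq V] [Nonempty V] (G : SimpleGraph V) (C : Matrix V V ℝ)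
    (hC : ThetaFeasible G C)
    (hdiag : ∀ a : V, C a a = ((Fintype.card V : ℝ))⁻¹)
    (hrow : ∀ a : V, (∑ b, C a b) = (∑ a, ∑ b, C a b) / (Fintype.card V : ℝ)) :
    (- Real.sqrt (∑ a, ∑ b, C a b)) ∈ {x : ℝ | ∃ (J v : V → ℝ) (M : Matrix V V ℝ),
        (∑ a, J a ^ 2) = 1 ∧ HFeasible G v M ∧ x = ∑ a, J a * v a} := by
  classical
  obtain ⟨hsym, hpsd, htr, hedge⟩ := hC
  set n : ℝ := (Fintype.card V : ℝ) with hn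
  have hn0 : (0:ℝ) < n := by rw [hn]; exact_mod_cast Fintype.card_pos
  set σ : ℝ := ∑ a, ∑ b, C a b with hσ
  have hσ0 : 0 ≤ σ := sum_nonneg_of_feasible ⟨hsym, hpsd, htr, hedge⟩
  have hsqn : Real.sqrt n ≠ 0 := by positivity
  have hmuln : Real.sqrt n * Real.sqrt n = n := Real.mul_self_sqrt hn0.le
  have hdiag' : ∀ a : V, C a a = n⁻¹ := hdiag
  have hrow' : ∀ a : V, (∑ b, C a b) = σ / n := hrow
  have hcol' : ∀ b : V, (∑ a, C a b) = σ / n := by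
    intro b
    rw [Finset.sum_congr rfl fun a _ => hsym.apply b a]
    exact hrow' b
  refine ⟨fun _ => 1 / Real.sqrt n, fun _ => - Real.sqrt (σ / n), n • C,
    ?_, ⟨⟨hsym.smul n, psd_smul hpsd hn0.le, ?_, ?_⟩, ?_⟩, ?_⟩
  · rw [Finset.sum_const, Finset.card_univ, nsmul_eq_mul, ← hn, div_pow, one_pow,
      Real.sq_sqrt hn0.le]
    field_simp
  · intro a
    rw [Matrix.smul_apply, hdiag' a, smul_eq_mul, mul_inv_cancel₀ (ne_of_gt hn0)]
  · intro a b hab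
    rw [Matrix.smul_apply, hedge a b hab, smul_eq_mul, mul_zero]
  · refine blockN_posSemidef (hsym.smul n) fun s x => ?_
    set S : ℝ := ∑ a, x a with hS
    have e1 : ∑ a, ∑ b, C a b * x b = σ / n * S := by
      rw [Finset.sum_comm]
      rw [Finset.sum_congr rfl fun b (_ : b ∈ Finset.univ) =>
        (Finset.sum_mul Finset.univ (fun a => C a b) (x b)).symm]
      rw [Finset.sum_congr rfl fun b (_ : b ∈ Finset.univ) => by rw [hcol' b]]
      rw [← Finset.mul_sum]
    have expand : qf C (fun a => x a - S / n) = qf C x - σ / n ^ 2 * S ^ 2 := by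
      simp only [qf]
      have hterm : ∀ a b : V, (x a - S / n) * C a b * (x b - S / n)
          = x a * C a b * x b - (S / n) * (C a b * x b) - (S / n) * (x a * C a b)
            + (S / n) ^ 2 * C a b := by
        intro a b; ring
      simp_rw [hterm, Finset.sum_add_distrib, Finset.sum_sub_distrib, ← Finset.mul_sum]
      rw [e1]
      simp only [hrow', Finset.sum_const, Finset.card_univ, nsmul_eq_mul, ← Finset.sum_mul,
        ← hn]
      rw [← hS]
      field_simp
      ring
    have hkey : σ / n ^ 2 * S ^ 2 ≤ qf C x := by
      have h0 := qf_nonneg hpsd (fun a => x a - S / n)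
      rw [expand] at h0
      linarith
    have hkey' : σ / n * S ^ 2 ≤ n * qf C x := by
      have h1 := mul_le_mul_of_nonneg_left hkey hn0.le
      calc σ / n * S ^ 2 = n * (σ / n ^ 2 * S ^ 2) := by field_simp
        _ ≤ n * qf C x := h1
    have hv : (∑ a, (- Real.sqrt (σ / n)) * x a) = - Real.sqrt (σ / n) * S := by
      rw [← Finset.mul_sum]
    rw [qf_smul, hv]
    have hsq2 : Real.sqrt (σ / n) ^ 2 = σ / n := Real.sq_sqrt (by positivity)
    nlinarith [sq_nonneg (s - Real.sqrt (σ / n) * S)]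
  · rw [Finset.sum_const, Finset.card_univ, nsmul_eq_mul, ← hn, Real.sqrt_div hσ0]
    field_simp
    rw [mul_comm]
    rw [Real.sq_sqrt hn0.le]; ring

end Stmt0Aux


theorem stmt0 {V : Type*} [Fintype V] [DecidableEq V] [Nonempty V]
    (G : SimpleGraph V) (hG : VertexTransitive G) :
    sInf {x : ℝ | ∃ (J v : V → ℝ) (M : Matrix V V ℝ),
        (∑ a, J a ^ 2) = 1 ∧ HFeasible G v M ∧ x = ∑ a, J a * v a}
      = - Real.sqrt (lovaszTheta G) := by
  classical
  have hn0 : (0:ℝ) < (Fintype.card V : ℝ) := by exact_mod_cast Fintype.card_pos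
  have hθ1 : (1:ℝ) ≤ lovaszTheta G := Stmt0Aux.theta_ge_one G
  have hθ0 : (0:ℝ) ≤ lovaszTheta G := le_trans zero_le_one hθ1
  have hlb : ∀ x ∈ {x : ℝ | ∃ (J v : V → ℝ) (M : Matrix V V ℝ),
      (∑ a, J a ^ 2) = 1 ∧ HFeasible G v M ∧ x = ∑ a, J a * v a},
      - Real.sqrt (lovaszTheta G) ≤ x := by
    rintro x ⟨J, v, M, hJ, hH, rfl⟩
    have h1 := Finset.sum_mul_sq_le_sq_mul_sq Finset.univ (fun a => -J a) v
    have h2 : (∑ a, (-J a) ^ 2) = 1 := by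
      rw [Finset.sum_congr rfl fun a (_ : a ∈ Finset.univ) => neg_sq (J a)]
      exact hJ
    rw [h2, one_mul] at h1
    have hcs : (∑ a, (-J a) * v a) ≤ Real.sqrt (∑ a, v a ^ 2) :=
      le_trans (le_abs_self _) (Real.abs_le_sqrt h1)
    have hvθ := Stmt0Aux.normsq_le_theta hH
    have h3 : Real.sqrt (∑ a, v a ^ 2) ≤ Real.sqrt (lovaszTheta G) :=
      Real.sqrt_le_sqrt hvθ
    have h4 : (∑ a, (-J a) * v a) = - ∑ a, J a * v a := by
      simp [neg_mul]
    linarith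
  obtain ⟨hidf, hids⟩ := Stmt0Aux.id_feasible (V := V) G
  have hid_diag : ∀ a : V,
      (((Fintype.card V : ℝ))⁻¹ • (1 : Matrix V V ℝ)) a a = ((Fintype.card V : ℝ))⁻¹ := by
    intro a; simp [Matrix.one_apply]
  have hid_row : ∀ a : V, (∑ b, (((Fintype.card V : ℝ))⁻¹ • (1 : Matrix V V ℝ)) a b)
      = (∑ a, ∑ b, (((Fintype.card V : ℝ))⁻¹ • (1 : Matrix V V ℝ)) a b)
        / (Fintype.card V : ℝ) := by
    intro a
    rw [hids]
    simp only [Matrix.smul_apply, Matrix.one_apply, smul_eq_mul, mul_ite, mul_one, mul_zero]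
    rw [Finset.sum_ite_eq Finset.univ a (fun _ => ((Fintype.card V : ℝ))⁻¹)]
    simp [one_div]
  have h0 := Stmt0Aux.construct G _ hidf hid_diag hid_row
  have hne : Set.Nonempty {x : ℝ | ∃ (J v : V → ℝ) (M : Matrix V V ℝ),
      (∑ a, J a ^ 2) = 1 ∧ HFeasible G v M ∧ x = ∑ a, J a * v a} := ⟨_, h0⟩
  have hbdd : BddBelow {x : ℝ | ∃ (J v : V → ℝ) (M : Matrix V V ℝ),
      (∑ a, J a ^ 2) = 1 ∧ HFeasible G v M ∧ x = ∑ a, J a * v a} :=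
    ⟨- Real.sqrt (lovaszTheta G), hlb⟩
  refine le_antisymm ?_ (le_csInf hne hlb)
  refine le_of_forall_pos_le_add fun η hη => ?_
  set ε : ℝ := min (η ^ 2) 1 with hε
  have hε0 : 0 < ε := lt_min (by positivity) one_pos
  have hθs : lovaszTheta G
      = sSup {x : ℝ | ∃ M : Matrix V V ℝ, ThetaFeasible G M ∧ x = ∑ a, ∑ b, M a b} := rfl
  have hlt : lovaszTheta G - ε < sSup {x : ℝ | ∃ M : Matrix V V ℝ,
      ThetaFeasible G M ∧ x = ∑ a, ∑ b, M a b} := by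
    rw [← hθs]; linarith
  have hnes : Set.Nonempty {x : ℝ | ∃ M : Matrix V V ℝ,
      ThetaFeasible G M ∧ x = ∑ a, ∑ b, M a b} := ⟨1, ⟨_, hidf, hids.symm⟩⟩
  obtain ⟨σx, ⟨B, hBf, rfl⟩, hσx⟩ := exists_lt_of_lt_csSup hnes hlt
  obtain ⟨C, hCf, hCsum, hCdiag, hCrow⟩ := Stmt0Aux.average G hG B hBf
  have hmem := Stmt0Aux.construct G C hCf hCdiag hCrow
  have h5 : sInf {x : ℝ | ∃ (J v : V → ℝ) (M : Matrix V V ℝ),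
      (∑ a, J a ^ 2) = 1 ∧ HFeasible G v M ∧ x = ∑ a, J a * v a}
      ≤ - Real.sqrt (∑ a, ∑ b, C a b) := csInf_le hbdd hmem
  rw [hCsum] at h5
  have hθε0 : 0 ≤ lovaszTheta G - ε := by
    have : ε ≤ 1 := min_le_right _ _
    linarith
  have h7 : Real.sqrt (lovaszTheta G - ε) ≤ Real.sqrt (∑ a, ∑ b, B a b) :=
    Real.sqrt_le_sqrt (le_of_lt hσx)
  have h8 : lovaszTheta G ≤ (Real.sqrt (lovaszTheta G - ε) + η) ^ 2 := by
    have hs := Real.sq_sqrt hθε0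
    have hεη : ε ≤ η ^ 2 := min_le_left _ _
    nlinarith [Real.sqrt_nonneg (lovaszTheta G - ε)]
  have h9 : Real.sqrt (lovaszTheta G) ≤ Real.sqrt (lovaszTheta G - ε) + η := by
    have h10 := Real.sqrt_le_sqrt h8
    rwa [Real.sqrt_sq (by positivity)] at h10
  linarith
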